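/- Let V be symmetric positive definite, S skew-symmetric, B = −(I+S)V^{−1}. Then for all s ≥ 0, the operator norm of e^{Bs} with respect to the inner product ⟨x,y⟩_V = ⟨x, V^{−1}y⟩ satisfies ‖e^{Bs}‖_V ≤ e^{−s/‖V‖}. -/

import Mathlib

open Matrix
open scoped Matrix.Norms.L2Operator

private theorem HasDerivAt.dotProduct'' {n : ℕ} {y w : ℝ → (Fin n → ℝ)}
    {y' w' : Fin n → ℝ} {s : ℝ}
    (hy : HasDerivAt y y' s) (hw : HasDerivAt w w' s) :
    HasDerivAt (fun t => y t ⬝ᵥ w t) (y' ⬝ᵥ w s + y s ⬝ᵥ w') s := by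
  have hyc := hasDerivAt_pi.mp hy
  have hwc := hasDerivAt_pi.mp hw
  have : HasDerivAt (fun t => ∑ i, y t i * w t i)
      (∑ i, (y' i * w s i + y s i * w' i)) s :=
    HasDerivAt.fun_sum fun i _ => (hyc i).mul (hwc i)
  simpa [dotProduct, Finset.sum_add_distrib] using this

private theorem hasDerivAt_mulVec' {n : ℕ} (A : Matrix (Fin n) (Fin n) ℝ)
    {y : ℝ → (Fin n → ℝ)} {y' : Fin n → ℝ} {s : ℝ} (hy : HasDerivAt y y' s) :
    HasDerivAt (fun t => A *ᵥ y t) (A *ᵥ y') s :=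
  (A.mulVecLin.toContinuousLinearMap.hasFDerivAt.comp_hasDerivAt s hy :)

private noncomputable def mulVecCLM' (n : ℕ) (x : Fin n → ℝ) :
    Matrix (Fin n) (Fin n) ℝ →L[ℝ] (Fin n → ℝ) :=
  LinearMap.toContinuousLinearMap
    { toFun := fun M => M *ᵥ x
      map_add' := fun M N => Matrix.add_mulVec M N x
      map_smul' := fun c M => (Matrix.smul_mulVec c M x) }

private theorem hasDerivAt_exp_mulVec {n : ℕ} (B : Matrix (Fin n) (Fin n) ℝ)
    (x : Fin n → ℝ) (s : ℝ) :
    HasDerivAt (fun t : ℝ => NormedSpace.exp (t • B) *ᵥ x)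
      (B *ᵥ (NormedSpace.exp (s • B) *ᵥ x)) s := by
  have h := hasDerivAt_exp_smul_const (𝕂 := ℝ) B s
  have h2 := (mulVecCLM' n x).hasFDerivAt.comp_hasDerivAt s h
  have h3 : mulVecCLM' n x (NormedSpace.exp (s • B) * B)
      = B *ᵥ (NormedSpace.exp (s • B) *ᵥ x) := by
    have hc : NormedSpace.exp (s • B) * B = B * NormedSpace.exp (s • B) :=
      (((Commute.refl B).smul_left s).exp_left).eq
    simp [mulVecCLM', hc, Matrix.mulVec_mulVec]
  rw [h3] at h2
  exact h2

private theorem dot_le_norm_mul {n : ℕ} (V : Matrix (Fin n) (Fin n) ℝ) (z : Fin n → ℝ) :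
    (V *ᵥ z) ⬝ᵥ z ≤ ‖V‖ * (z ⬝ᵥ z) := by
  set z' : EuclideanSpace ℝ (Fin n) := (EuclideanSpace.equiv (Fin n) ℝ).symm z with hz'
  have h1 : (V *ᵥ z) ⬝ᵥ z = inner ℝ ((EuclideanSpace.equiv (Fin n) ℝ).symm (V *ᵥ z)) z' := by
    simp [PiLp.inner_apply, dotProduct, hz', RCLike.inner_apply, mul_comm]
  have h2 : z ⬝ᵥ z = ‖z'‖ ^ 2 := by
    rw [← real_inner_self_eq_norm_sq]
    simp only [PiLp.inner_apply, dotProduct, hz', RCLike.inner_apply, EuclideanSpace.equiv, conj_trivial]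
    rfl
  rw [h1, h2]
  calc inner ℝ ((EuclideanSpace.equiv (Fin n) ℝ).symm (V *ᵥ z)) z'
      ≤ ‖(EuclideanSpace.equiv (Fin n) ℝ).symm (V *ᵥ z)‖ * ‖z'‖ := real_inner_le_norm _ _
    _ ≤ (‖V‖ * ‖z'‖) * ‖z'‖ :=
        mul_le_mul_of_nonneg_right (V.l2_opNorm_mulVec z') (norm_nonneg _)
    _ = ‖V‖ * ‖z'‖ ^ 2 := by ring

/-- for V symmetric positive definite, S skew-symmetric and
B = −(I+S)V⁻¹, the matrix exponential satisfies ‖e^{Bs}x‖_V ≤ e^{−s/‖V‖}‖x‖_V for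
all s ≥ 0 and all x, where ‖x‖_V² = ⟨x, V⁻¹x⟩ and ‖V‖ is the Euclidean operator
norm; i.e. the ‖·‖_V-operator norm of e^{Bs} is at most e^{−s/‖V‖}. -/
theorem exp_contraction_estimate
    (n : ℕ) (V S B : Matrix (Fin n) (Fin n) ℝ)
    (hV : V.PosDef) (hVsym : Vᵀ = V) (hSskew : Sᵀ = -S)
    (hB : B = -((1 + S) * V⁻¹)) :
    ∀ s : ℝ, 0 ≤ s → ∀ x : Fin n → ℝ,
      Real.sqrt ((NormedSpace.exp (s • B) *ᵥ x) ⬝ᵥ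
          (V⁻¹ *ᵥ (NormedSpace.exp (s • B) *ᵥ x))) ≤
        Real.exp (-s / ‖V‖) * Real.sqrt (x ⬝ᵥ (V⁻¹ *ᵥ x)) := by
  intro s hs x
  rcases Nat.eq_zero_or_pos n with hn | hn
  · subst hn
    simp [dotProduct]
  -- ‖V‖ > 0
  have hne : Nonempty (Fin n) := Fin.pos_iff_nonempty.mp hn
  have hVne : V ≠ 0 := by
    intro h
    have := hV.det_pos
    rw [h, Matrix.det_zero] at this
    exact lt_irrefl _ this
  have hnV : (0:ℝ) < ‖V‖ := norm_pos_iff.mpr hVne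
  have hVinv : (V⁻¹)ᵀ = V⁻¹ := by rw [Matrix.transpose_nonsing_inv, hVsym]
  have hVunit : IsUnit V.det := hV.det_pos.ne'.isUnit
  -- notation
  set c : ℝ := 2 / ‖V‖ with hc
  have hcpos : 0 < c := by positivity
  set y : ℝ → (Fin n → ℝ) := fun t => NormedSpace.exp (t • B) *ᵥ x with hy
  set f : ℝ → ℝ := fun t => y t ⬝ᵥ (V⁻¹ *ᵥ y t) with hf
  set g : ℝ → ℝ := fun t => Real.exp (c * t) * f t with hg
  -- the algebraic identity
  have key : ∀ v : Fin n → ℝ,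
      (B *ᵥ v) ⬝ᵥ (V⁻¹ *ᵥ v) + v ⬝ᵥ (V⁻¹ *ᵥ (B *ᵥ v))
        = -2 * ((V⁻¹ *ᵥ v) ⬝ᵥ (V⁻¹ *ᵥ v)) := by
    intro v
    set z := V⁻¹ *ᵥ v with hz
    have hBy : B *ᵥ v = -(z + S *ᵥ z) := by
      rw [hB, Matrix.neg_mulVec, ← Matrix.mulVec_mulVec, Matrix.add_mulVec,
        Matrix.one_mulVec, ← hz]
    have hsymdot : ∀ w : Fin n → ℝ, v ⬝ᵥ (V⁻¹ *ᵥ w) = z ⬝ᵥ w := by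
      intro w
      rw [Matrix.dotProduct_mulVec, ← Matrix.mulVec_transpose, hVinv, ← hz]
    have hskew : z ⬝ᵥ (S *ᵥ z) = -((S *ᵥ z) ⬝ᵥ z) := by
      rw [Matrix.dotProduct_mulVec, ← Matrix.mulVec_transpose, hSskew,
        Matrix.neg_mulVec, neg_dotProduct]
    rw [hsymdot, hBy]
    simp only [dotProduct_neg, neg_dotProduct, add_dotProduct,
      dotProduct_add, hskew]
    ring
  -- f bounded by ‖V‖ times z⬝z
  have hfle : ∀ t, f t ≤ ‖V‖ * ((V⁻¹ *ᵥ y t) ⬝ᵥ (V⁻¹ *ᵥ y t)) := by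
    intro t
    have hyz : y t = V *ᵥ (V⁻¹ *ᵥ y t) := by
      rw [Matrix.mulVec_mulVec, Matrix.mul_nonsing_inv V hVunit, Matrix.one_mulVec]
    calc f t = (V *ᵥ (V⁻¹ *ᵥ y t)) ⬝ᵥ (V⁻¹ *ᵥ y t) := by rw [hf]; simp only; rw [← hyz]
      _ ≤ ‖V‖ * ((V⁻¹ *ᵥ y t) ⬝ᵥ (V⁻¹ *ᵥ y t)) := dot_le_norm_mul V _
  -- derivatives
  have hfd : ∀ t, HasDerivAt f (-2 * ((V⁻¹ *ᵥ y t) ⬝ᵥ (V⁻¹ *ᵥ y t))) t := by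
    intro t
    have hyd : HasDerivAt y (B *ᵥ y t) t := hasDerivAt_exp_mulVec B x t
    have := HasDerivAt.dotProduct'' hyd (hasDerivAt_mulVec' V⁻¹ hyd)
    rw [← key (y t)]
    exact this
  have hgd : ∀ t, HasDerivAt g
      (Real.exp (c * t) * c * f t + Real.exp (c * t) * (-2 * ((V⁻¹ *ᵥ y t) ⬝ᵥ (V⁻¹ *ᵥ y t)))) t := by
    intro t
    have he : HasDerivAt (fun u : ℝ => Real.exp (c * u)) (Real.exp (c * t) * c) t := by
      have := (Real.hasDerivAt_exp (c * t)).comp t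
        (by simpa using (hasDerivAt_id t).const_mul c)
      exact this
    exact he.mul (hfd t)
  -- g is antitone
  have hganti : Antitone g := by
    apply antitone_of_deriv_nonpos
    · exact fun t => (hgd t).differentiableAt
    · intro t
      rw [(hgd t).deriv]
      have h1 : c * f t ≤ 2 * ((V⁻¹ *ᵥ y t) ⬝ᵥ (V⁻¹ *ᵥ y t)) := by
        rw [hc, div_mul_eq_mul_div, div_le_iff₀ hnV]
        calc 2 * f t ≤ 2 * (‖V‖ * ((V⁻¹ *ᵥ y t) ⬝ᵥ (V⁻¹ *ᵥ y t))) := by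
              linarith [hfle t]
          _ = 2 * ((V⁻¹ *ᵥ y t) ⬝ᵥ (V⁻¹ *ᵥ y t)) * ‖V‖ := by ring
      nlinarith [Real.exp_pos (c * t), h1]
  have hg0 : g s ≤ g 0 := hganti hs
  have hgs0 : g 0 = x ⬝ᵥ (V⁻¹ *ᵥ x) := by
    simp [hg, hf, hy, NormedSpace.exp_zero, Matrix.one_mulVec]
  have hfs : f s ≤ Real.exp (-s / ‖V‖) ^ 2 * (x ⬝ᵥ (V⁻¹ *ᵥ x)) := by
    have hexp2 : Real.exp (-s / ‖V‖) ^ 2 = Real.exp (-(c * s)) := by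
      rw [← Real.exp_nat_mul]
      congr 1
      field_simp [hc]
      have h2V : ‖V‖ * (2 / ‖V‖) = 2 := by field_simp [hnV.ne']
      rw [hc, mul_assoc, h2V]; push_cast; ring
    rw [hgs0] at hg0
    have h2 : Real.exp (c * s) * f s ≤ x ⬝ᵥ (V⁻¹ *ᵥ x) := hg0
    rw [hexp2, Real.exp_neg, inv_mul_eq_div, le_div_iff₀ (Real.exp_pos _), mul_comm]
    exact h2
  calc Real.sqrt (y s ⬝ᵥ (V⁻¹ *ᵥ y s))
      ≤ Real.sqrt (Real.exp (-s / ‖V‖) ^ 2 * (x ⬝ᵥ (V⁻¹ *ᵥ x))) := Real.sqrt_le_sqrt (hfs)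
    _ = Real.exp (-s / ‖V‖) * Real.sqrt (x ⬝ᵥ (V⁻¹ *ᵥ x)) := by
        rw [Real.sqrt_mul (sq_nonneg _), Real.sqrt_sq (Real.exp_pos _).le]
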